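/- Let X and Y be measurable spaces, γ a probability measure on X×Y with marginals ρ₁ and ρ₂, and m₁ ∈ P(X), m₂ ∈ P(Y) reference measures. Then KL(γ | m₁⊗m₂) = KL(γ | ρ₁⊗ρ₂) + KL(ρ₁ | m₁) + KL(ρ₂ | m₂), where both sides may be +∞. -/

import Mathlib

open MeasureTheory Real

noncomputable section
open Classical in

/-- Kullback–Leibler divergence, valued in `EReal` (`⊤` if `μ` is not absolutely
continuous w.r.t. `ν` or the log-density is not integrable). -/
def KL {Z : Type*} [MeasurableSpace Z] (μ ν : Measure Z) : EReal :=
  if μ ≪ ν ∧ Integrable (fun z => Real.log (μ.rnDeriv ν z).toReal) μ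
  then ((∫ z, Real.log (μ.rnDeriv ν z).toReal ∂μ : ℝ) : EReal) else ⊤

lemma KL_ne_bot {Z : Type*} [MeasurableSpace Z] (μ ν : Measure Z) : KL μ ν ≠ ⊥ := by
  rw [KL]
  split
  · exact EReal.coe_ne_bot _
  · simp

lemma KL_eq_top_of_not {Z : Type*} [MeasurableSpace Z] {μ ν : Measure Z}
    (h : ¬(μ ≪ ν ∧ Integrable (fun z => Real.log (μ.rnDeriv ν z).toReal) μ)) :
    KL μ ν = ⊤ := by
  rw [KL, if_neg h]

lemma sum3_eq_top {a b c : EReal} (ha : a ≠ ⊥) (hb : b ≠ ⊥) (hc : c ≠ ⊥)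
    (h : a = ⊤ ∨ b = ⊤ ∨ c = ⊤) : a + b + c = ⊤ := by
  rcases h with h | h | h
  · subst h; rw [EReal.top_add_of_ne_bot hb, EReal.top_add_of_ne_bot hc]
  · subst h; rw [EReal.add_top_of_ne_bot ha, EReal.top_add_of_ne_bot hc]
  · subst h
    apply EReal.add_top_of_ne_bot
    rw [Ne, EReal.add_eq_bot_iff]
    tauto

lemma aux_bound (t : ℝ) (ht : 0 ≤ t) : t * max (-Real.log t) 0 ≤ 2 := by
  rcases le_or_gt 1 t with h1 | h1
  · have : Real.log t ≥ 0 := Real.log_nonneg h1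
    have : max (-Real.log t) 0 = 0 := max_eq_right (by linarith)
    rw [this, mul_zero]; norm_num
  rcases eq_or_lt_of_le ht with h0 | h0
  · rw [← h0]; norm_num
  · set s := Real.sqrt t with hs
    have hs0 : 0 < s := Real.sqrt_pos.mpr h0
    have hs2 : s * s = t := Real.mul_self_sqrt ht
    have hlog : Real.log s = Real.log t / 2 := Real.log_sqrt ht
    have hls : -Real.log s ≤ 1 / s - 1 := by
      have := Real.log_le_sub_one_of_pos (show 0 < 1/s by positivity)
      rwa [Real.log_div one_ne_zero hs0.ne', Real.log_one, zero_sub] at this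
    have hmax : max (-Real.log t) 0 = -Real.log t :=
      max_eq_left (by nlinarith [Real.log_neg h0 h1])
    rw [hmax]
    have h2 : -Real.log t = 2 * (-Real.log s) := by rw [hlog]; ring
    have hss : s ≤ 1 := by nlinarith
    have key : t * (2 * (-Real.log s)) ≤ t * (2 * (1/s - 1)) := by
      apply mul_le_mul_of_nonneg_left _ ht
      linarith
    rw [h2]
    refine key.trans ?_
    have : t * (2 * (1/s - 1)) = 2 * s - 2 * t := by
      field_simp
      nlinarith
    rw [this]; nlinarith

lemma negpart_integrable {Z : Type*} [MeasurableSpace Z] {μ ν : Measure Z}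
    [IsProbabilityMeasure μ] [IsProbabilityMeasure ν] (hμν : μ ≪ ν) :
    Integrable (fun z => max (-Real.log ((μ.rnDeriv ν z).toReal)) 0) μ := by
  have hmeas : Measurable fun z => max (-Real.log ((μ.rnDeriv ν z).toReal)) 0 :=
    ((Real.measurable_log.comp (Measure.measurable_rnDeriv μ ν).ennreal_toReal).neg).max
      measurable_const
  refine ⟨hmeas.aestronglyMeasurable, ?_⟩
  rw [hasFiniteIntegral_iff_norm]
  have hnorm : ∀ z, ENNReal.ofReal ‖max (-Real.log ((μ.rnDeriv ν z).toReal)) 0‖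
      = ENNReal.ofReal (max (-Real.log ((μ.rnDeriv ν z).toReal)) 0) := by
    intro z; rw [Real.norm_of_nonneg (le_max_right _ _)]
  simp_rw [hnorm]
  have hint : ∫⁻ z, ENNReal.ofReal (max (-Real.log ((μ.rnDeriv ν z).toReal)) 0) ∂μ
      = ∫⁻ z, μ.rnDeriv ν z * ENNReal.ofReal (max (-Real.log ((μ.rnDeriv ν z).toReal)) 0) ∂ν :=
    (MeasureTheory.lintegral_rnDeriv_mul hμν
      ((ENNReal.measurable_ofReal.comp hmeas).aemeasurable)).symm
  rw [hint]
  have hbd : ∀ z, μ.rnDeriv ν z * ENNReal.ofReal (max (-Real.log ((μ.rnDeriv ν z).toReal)) 0)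
      ≤ ENNReal.ofReal 2 := by
    intro z
    set a := μ.rnDeriv ν z with ha
    rcases eq_or_ne a ⊤ with h | h
    · rw [h]; simp [ENNReal.toReal_top, Real.log_zero]
    · nth_rewrite 1 [← ENNReal.ofReal_toReal h]
      rw [← ENNReal.ofReal_mul ENNReal.toReal_nonneg]
      exact ENNReal.ofReal_le_ofReal (aux_bound _ ENNReal.toReal_nonneg)
  calc ∫⁻ z, μ.rnDeriv ν z * ENNReal.ofReal (max (-Real.log ((μ.rnDeriv ν z).toReal)) 0) ∂ν
      ≤ ∫⁻ _, ENNReal.ofReal 2 ∂ν := lintegral_mono hbd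
    _ = ENNReal.ofReal 2 := by simp
    _ < ⊤ := ENNReal.ofReal_lt_top

section Aux
variable {X Y : Type*} [MeasurableSpace X] [MeasurableSpace Y]

lemma prod_eq_withDensity (ρ₁ m₁ : Measure X) (ρ₂ m₂ : Measure Y)
    [IsProbabilityMeasure ρ₁] [IsProbabilityMeasure ρ₂]
    [IsProbabilityMeasure m₁] [IsProbabilityMeasure m₂]
    (h1 : ρ₁ ≪ m₁) (h2 : ρ₂ ≪ m₂) :
    ρ₁.prod ρ₂ = (m₁.prod m₂).withDensity
      (fun z => ρ₁.rnDeriv m₁ z.1 * ρ₂.rnDeriv m₂ z.2) := by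
  refine Measure.prod_eq fun s t hs ht => ?_
  rw [withDensity_apply _ (hs.prod ht), ← Measure.prod_restrict,
    lintegral_prod_mul (Measure.measurable_rnDeriv ρ₁ m₁).aemeasurable
      (Measure.measurable_rnDeriv ρ₂ m₂).aemeasurable,
    Measure.setLIntegral_rnDeriv h1 s, Measure.setLIntegral_rnDeriv h2 t]

lemma marginal_fst_ac (γ : Measure (X × Y)) (m₁ : Measure X) (m₂ : Measure Y)
    [SFinite m₂] (hac : γ ≪ m₁.prod m₂) : γ.map Prod.fst ≪ m₁ := by
  refine Measure.AbsolutelyContinuous.mk fun s hs h0 => ?_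
  rw [Measure.map_apply measurable_fst hs]
  refine hac ?_
  have : Prod.fst ⁻¹' s = s ×ˢ (Set.univ : Set Y) := by
    ext z; simp
  rw [this, Measure.prod_prod, h0, zero_mul]

lemma marginal_snd_ac (γ : Measure (X × Y)) (m₁ : Measure X) (m₂ : Measure Y)
    [SFinite m₂] (hac : γ ≪ m₁.prod m₂) : γ.map Prod.snd ≪ m₂ := by
  refine Measure.AbsolutelyContinuous.mk fun s hs h0 => ?_
  rw [Measure.map_apply measurable_snd hs]
  refine hac ?_
  have : Prod.snd ⁻¹' s = (Set.univ : Set X) ×ˢ s := by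
    ext z; simp
  rw [this, Measure.prod_prod, h0, mul_zero]

lemma gamma_ac_marginals (γ : Measure (X × Y)) [IsProbabilityMeasure γ]
    (m₁ : Measure X) (m₂ : Measure Y)
    [IsProbabilityMeasure m₁] [IsProbabilityMeasure m₂]
    (hac : γ ≪ m₁.prod m₂) :
    γ ≪ (γ.map Prod.fst).prod (γ.map Prod.snd) := by
  set ρ₁ := γ.map Prod.fst with hρ₁def
  set ρ₂ := γ.map Prod.snd with hρ₂def
  haveI : IsProbabilityMeasure ρ₁ := Measure.isProbabilityMeasure_map measurable_fst.aemeasurable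
  haveI : IsProbabilityMeasure ρ₂ := Measure.isProbabilityMeasure_map measurable_snd.aemeasurable
  have h1 : ρ₁ ≪ m₁ := marginal_fst_ac γ m₁ m₂ hac
  have h2 : ρ₂ ≪ m₂ := marginal_snd_ac γ m₁ m₂ hac
  set g := ρ₁.rnDeriv m₁ with hg
  set h := ρ₂.rnDeriv m₂ with hh
  have hgm : Measurable g := Measure.measurable_rnDeriv _ _
  have hhm : Measurable h := Measure.measurable_rnDeriv _ _
  have hA : γ {z : X × Y | g z.1 = 0} = 0 := by
    have hAs : MeasurableSet {x : X | g x = 0} := hgm (measurableSet_singleton 0)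
    have : γ {z : X × Y | g z.1 = 0} = ρ₁ {x | g x = 0} := by
      rw [hρ₁def, Measure.map_apply measurable_fst hAs]; rfl
    rw [this, ← Measure.setLIntegral_rnDeriv h1]
    rw [setLIntegral_congr_fun hAs (fun x hx => hx)]
    simp
  have hB : γ {z : X × Y | h z.2 = 0} = 0 := by
    have hBs : MeasurableSet {y : Y | h y = 0} := hhm (measurableSet_singleton 0)
    have : γ {z : X × Y | h z.2 = 0} = ρ₂ {y | h y = 0} := by
      rw [hρ₂def, Measure.map_apply measurable_snd hBs]; rfl
    rw [this, ← Measure.setLIntegral_rnDeriv h2]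
    rw [setLIntegral_congr_fun hBs (fun y hy => hy)]
    simp
  refine Measure.AbsolutelyContinuous.mk fun s hs h0 => ?_
  have hwd : (m₁.prod m₂).withDensity (fun z => g z.1 * h z.2) s = 0 := by
    rw [← prod_eq_withDensity ρ₁ m₁ ρ₂ m₂ h1 h2]; exact h0
  rw [withDensity_apply _ hs] at hwd
  have hmeasfun : Measurable fun z : X × Y => g z.1 * h z.2 :=
    (hgm.comp measurable_fst).mul (hhm.comp measurable_snd)
  have hae : ∀ᵐ z ∂(m₁.prod m₂).restrict s, g z.1 * h z.2 = 0 :=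
    (lintegral_eq_zero_iff hmeasfun).mp hwd
  rw [ae_restrict_iff' hs] at hae
  have hnull : (m₁.prod m₂) (s \ ({z : X × Y | g z.1 = 0} ∪ {z | h z.2 = 0})) = 0 := by
    refine measure_mono_null (fun z hz => ?_) (ae_iff.mp hae)
    rcases hz with ⟨hzs, hzn⟩
    intro himp
    rcases mul_eq_zero.mp (himp hzs) with hg0 | hh0
    · exact hzn (Set.mem_union_left _ hg0)
    · exact hzn (Set.mem_union_right _ hh0)
  have hγnull : γ (s \ ({z : X × Y | g z.1 = 0} ∪ {z | h z.2 = 0})) = 0 := hac hnull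
  have : γ s ≤ γ (s \ ({z : X × Y | g z.1 = 0} ∪ {z | h z.2 = 0}))
      + γ {z : X × Y | g z.1 = 0} + γ {z | h z.2 = 0} := by
    calc γ s ≤ γ ((s \ ({z : X × Y | g z.1 = 0} ∪ {z | h z.2 = 0}))
        ∪ ({z : X × Y | g z.1 = 0} ∪ {z | h z.2 = 0})) :=
          measure_mono (by
            intro z hz
            by_cases hzg : z ∈ ({z : X × Y | g z.1 = 0} ∪ {z | h z.2 = 0})
            · exact Set.mem_union_right _ hzg
            · exact Set.mem_union_left _ ⟨hz, hzg⟩)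
      _ ≤ γ (s \ ({z : X × Y | g z.1 = 0} ∪ {z | h z.2 = 0}))
          + γ ({z : X × Y | g z.1 = 0} ∪ {z | h z.2 = 0}) := measure_union_le _ _
      _ ≤ _ := by
          rw [add_assoc]
          exact add_le_add le_rfl (measure_union_le _ _)
  rw [hγnull, hA, hB] at this
  simpa using this

end Aux

theorem KL_prod_decomposition
    {X Y : Type*} [MeasurableSpace X] [MeasurableSpace Y]
    (γ : Measure (X × Y)) [IsProbabilityMeasure γ]
    (m₁ : Measure X) (m₂ : Measure Y)
    [IsProbabilityMeasure m₁] [IsProbabilityMeasure m₂] :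
    KL γ (m₁.prod m₂) =
      KL γ ((γ.map Prod.fst).prod (γ.map Prod.snd))
        + KL (γ.map Prod.fst) m₁ + KL (γ.map Prod.snd) m₂ := by
  set ρ₁ := γ.map Prod.fst with hρ₁def
  set ρ₂ := γ.map Prod.snd with hρ₂def
  haveI : IsProbabilityMeasure ρ₁ := Measure.isProbabilityMeasure_map measurable_fst.aemeasurable
  haveI : IsProbabilityMeasure ρ₂ := Measure.isProbabilityMeasure_map measurable_snd.aemeasurable
  by_cases hac : γ ≪ m₁.prod m₂
  case neg =>
    -- the LHS is ⊤; at least one of the three KL terms on the right is ⊤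
    rw [KL_eq_top_of_not (fun h => hac h.1)]
    refine (sum3_eq_top (KL_ne_bot _ _) (KL_ne_bot _ _) (KL_ne_bot _ _) ?_).symm
    by_cases h1 : ρ₁ ≪ m₁
    · by_cases h2 : ρ₂ ≪ m₂
      · left
        refine KL_eq_top_of_not (fun h => hac ?_)
        exact h.1.trans (Measure.AbsolutelyContinuous.prod h1 h2)
      · right; right; exact KL_eq_top_of_not (fun h => h2 h.1)
    · right; left; exact KL_eq_top_of_not (fun h => h1 h.1)
  case pos =>
    have h1 : ρ₁ ≪ m₁ := marginal_fst_ac γ m₁ m₂ hac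
    have h2 : ρ₂ ≪ m₂ := marginal_snd_ac γ m₁ m₂ hac
    have hγρ : γ ≪ ρ₁.prod ρ₂ := gamma_ac_marginals γ m₁ m₂ hac
    set f1 := ρ₁.rnDeriv m₁ with hf1
    set f2 := ρ₂.rnDeriv m₂ with hf2
    set L : X × Y → ℝ := fun z => Real.log ((γ.rnDeriv (m₁.prod m₂) z).toReal) with hL
    set A : X × Y → ℝ := fun z => Real.log ((γ.rnDeriv (ρ₁.prod ρ₂) z).toReal) with hA
    set B : X → ℝ := fun x => Real.log ((f1 x).toReal) with hB
    set C : Y → ℝ := fun y => Real.log ((f2 y).toReal) with hC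
    have hmf1 : Measurable f1 := Measure.measurable_rnDeriv _ _
    have hmf2 : Measurable f2 := Measure.measurable_rnDeriv _ _
    have hmL : Measurable L :=
      Real.measurable_log.comp (Measure.measurable_rnDeriv _ _).ennreal_toReal
    have hmA : Measurable A :=
      Real.measurable_log.comp (Measure.measurable_rnDeriv _ _).ennreal_toReal
    have hmB : Measurable B := Real.measurable_log.comp hmf1.ennreal_toReal
    have hmC : Measurable C := Real.measurable_log.comp hmf2.ennreal_toReal
    -- the a.e. identity  L = A + B ∘ fst + C ∘ snd
    have hmeasfun : Measurable fun z : X × Y => f1 z.1 * f2 z.2 :=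
      (hmf1.comp measurable_fst).mul (hmf2.comp measurable_snd)
    have hd : (ρ₁.prod ρ₂).rnDeriv (m₁.prod m₂) =ᵐ[m₁.prod m₂]
        fun z => f1 z.1 * f2 z.2 := by
      rw [prod_eq_withDensity ρ₁ m₁ ρ₂ m₂ h1 h2]
      exact Measure.rnDeriv_withDensity _ hmeasfun
    have hmul : γ.rnDeriv (ρ₁.prod ρ₂) * (ρ₁.prod ρ₂).rnDeriv (m₁.prod m₂)
        =ᵐ[m₁.prod m₂] γ.rnDeriv (m₁.prod m₂) := Measure.rnDeriv_mul_rnDeriv hγρ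
    have hdγ : ∀ᵐ z ∂γ, (ρ₁.prod ρ₂).rnDeriv (m₁.prod m₂) z = f1 z.1 * f2 z.2 := hac.ae_le hd
    have hmulγ : ∀ᵐ z ∂γ,
        γ.rnDeriv (ρ₁.prod ρ₂) z * (ρ₁.prod ρ₂).rnDeriv (m₁.prod m₂) z
          = γ.rnDeriv (m₁.prod m₂) z := hac.ae_le hmul
    have hposG : ∀ᵐ z ∂γ, 0 < γ.rnDeriv (ρ₁.prod ρ₂) z := Measure.rnDeriv_pos hγρ
    have hfinG : ∀ᵐ z ∂γ, γ.rnDeriv (ρ₁.prod ρ₂) z ≠ ⊤ :=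
      hγρ.ae_le (Measure.rnDeriv_ne_top γ _)
    have hpos1 : ∀ᵐ z ∂γ, 0 < f1 z.1 :=
      ae_of_ae_map measurable_fst.aemeasurable
        (by rw [← hρ₁def]; exact Measure.rnDeriv_pos h1)
    have hfin1 : ∀ᵐ z ∂γ, f1 z.1 ≠ ⊤ :=
      ae_of_ae_map measurable_fst.aemeasurable
        (by rw [← hρ₁def]; exact h1.ae_le (Measure.rnDeriv_ne_top ρ₁ m₁))
    have hpos2 : ∀ᵐ z ∂γ, 0 < f2 z.2 :=
      ae_of_ae_map measurable_snd.aemeasurable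
        (by rw [← hρ₂def]; exact Measure.rnDeriv_pos h2)
    have hfin2 : ∀ᵐ z ∂γ, f2 z.2 ≠ ⊤ :=
      ae_of_ae_map measurable_snd.aemeasurable
        (by rw [← hρ₂def]; exact h2.ae_le (Measure.rnDeriv_ne_top ρ₂ m₂))
    have hAE : ∀ᵐ z ∂γ, L z = A z + B z.1 + C z.2 := by
      filter_upwards [hdγ, hmulγ, hposG, hfinG, hpos1, hfin1, hpos2, hfin2] with z
        hdz hmz hG hGfin h1z h1fin h2z h2fin
      have hGne : (γ.rnDeriv (ρ₁.prod ρ₂) z).toReal ≠ 0 :=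
        ENNReal.toReal_ne_zero.mpr ⟨hG.ne', hGfin⟩
      have h1ne : (f1 z.1).toReal ≠ 0 := ENNReal.toReal_ne_zero.mpr ⟨h1z.ne', h1fin⟩
      have h2ne : (f2 z.2).toReal ≠ 0 := ENNReal.toReal_ne_zero.mpr ⟨h2z.ne', h2fin⟩
      have : γ.rnDeriv (m₁.prod m₂) z
          = γ.rnDeriv (ρ₁.prod ρ₂) z * (f1 z.1 * f2 z.2) := by
        rw [← hmz, hdz]
      simp only [hL, hA, hB, hC]
      rw [this, ENNReal.toReal_mul, ENNReal.toReal_mul,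
        Real.log_mul hGne (mul_ne_zero h1ne h2ne), Real.log_mul h1ne h2ne]
      ring
    -- negative parts are integrable
    have nA : Integrable (fun z => max (-A z) 0) γ := negpart_integrable hγρ
    have nBρ : Integrable (fun x => max (-B x) 0) ρ₁ := negpart_integrable h1
    have nCρ : Integrable (fun y => max (-C y) 0) ρ₂ := negpart_integrable h2
    have hBiffγ : Integrable (fun x => max (-B x) 0) ρ₁
        ↔ Integrable (fun z : X × Y => max (-B z.1) 0) γ := by
      rw [hρ₁def]
      exact integrable_map_measure ((hmB.neg.max measurable_const).aestronglyMeasurable)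
        measurable_fst.aemeasurable
    have hCiffγ : Integrable (fun y => max (-C y) 0) ρ₂
        ↔ Integrable (fun z : X × Y => max (-C z.2) 0) γ := by
      rw [hρ₂def]
      exact integrable_map_measure ((hmC.neg.max measurable_const).aestronglyMeasurable)
        measurable_snd.aemeasurable
    have nB : Integrable (fun z : X × Y => max (-B z.1) 0) γ := hBiffγ.mp nBρ
    have nC : Integrable (fun z : X × Y => max (-C z.2) 0) γ := hCiffγ.mp nCρ
    -- transport integrability of B and C along the projections
    have hBiff : Integrable B ρ₁ ↔ Integrable (fun z : X × Y => B z.1) γ := by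
      rw [hρ₁def]
      exact integrable_map_measure hmB.aestronglyMeasurable measurable_fst.aemeasurable
    have hCiff : Integrable C ρ₂ ↔ Integrable (fun z : X × Y => C z.2) γ := by
      rw [hρ₂def]
      exact integrable_map_measure hmC.aestronglyMeasurable measurable_snd.aemeasurable
    -- integrability equivalence
    have hback : (Integrable A γ ∧ Integrable (fun z : X × Y => B z.1) γ
        ∧ Integrable (fun z : X × Y => C z.2) γ) → Integrable L γ := by
      rintro ⟨hIA, hIB, hIC⟩
      exact ((hIA.add hIB).add hIC).congr (hAE.mono fun z hz => hz.symm)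
    by_cases hIntL : Integrable L γ
    case neg =>
      rw [KL_eq_top_of_not (fun h => hIntL h.2)]
      refine (sum3_eq_top (KL_ne_bot _ _) (KL_ne_bot _ _) (KL_ne_bot _ _) ?_).symm
      by_cases hIA : Integrable A γ
      · by_cases hIB : Integrable (fun z : X × Y => B z.1) γ
        · by_cases hIC : Integrable (fun z : X × Y => C z.2) γ
          · exact absurd (hback ⟨hIA, hIB, hIC⟩) hIntL
          · right; right
            exact KL_eq_top_of_not (fun h => hIC (hCiff.mp h.2))
        · right; left
          exact KL_eq_top_of_not (fun h => hIB (hBiff.mp h.2))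
      · left; exact KL_eq_top_of_not (fun h => hIA h.2)
    case pos =>
      -- forward direction: each summand is integrable
      set bound : X × Y → ℝ := fun z =>
        |L z| + max (-A z) 0 + max (-B z.1) 0 + max (-C z.2) 0 with hbound
      have hIbound : Integrable bound γ := ((hIntL.abs.add nA).add nB).add nC
      have hboundA : ∀ᵐ z ∂γ, ‖A z‖ ≤ bound z := by
        filter_upwards [hAE] with z hz
        rw [Real.norm_eq_abs, abs_le]
        constructor
        · have : -A z ≤ max (-A z) 0 := le_max_left _ _
          have hb : (0:ℝ) ≤ |L z| + max (-B z.1) 0 + max (-C z.2) 0 := by positivity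
          simp only [hbound]; nlinarith [abs_nonneg (L z), le_max_right (-B z.1) (0:ℝ),
            le_max_right (-C z.2) (0:ℝ), le_max_right (-A z) (0:ℝ)]
        · have hLz : L z ≤ |L z| := le_abs_self _
          have hBz : -B z.1 ≤ max (-B z.1) 0 := le_max_left _ _
          have hCz : -C z.2 ≤ max (-C z.2) 0 := le_max_left _ _
          have hAz : A z = L z - B z.1 - C z.2 := by linarith [hz]
          simp only [hbound]
          nlinarith [le_max_right (-A z) (0:ℝ)]
      have hboundB : ∀ᵐ z ∂γ, ‖B z.1‖ ≤ bound z := by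
        filter_upwards [hAE] with z hz
        rw [Real.norm_eq_abs, abs_le]
        constructor
        · simp only [hbound]
          nlinarith [abs_nonneg (L z), le_max_right (-B z.1) (0:ℝ), le_max_left (-B z.1) (0:ℝ),
            le_max_right (-C z.2) (0:ℝ), le_max_right (-A z) (0:ℝ)]
        · have hLz : L z ≤ |L z| := le_abs_self _
          simp only [hbound]
          nlinarith [le_max_left (-A z) (0:ℝ), le_max_left (-C z.2) (0:ℝ),
            le_max_right (-B z.1) (0:ℝ)]
      have hboundC : ∀ᵐ z ∂γ, ‖C z.2‖ ≤ bound z := by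
        filter_upwards [hAE] with z hz
        rw [Real.norm_eq_abs, abs_le]
        constructor
        · simp only [hbound]
          nlinarith [abs_nonneg (L z), le_max_right (-B z.1) (0:ℝ), le_max_left (-C z.2) (0:ℝ),
            le_max_right (-C z.2) (0:ℝ), le_max_right (-A z) (0:ℝ)]
        · have hLz : L z ≤ |L z| := le_abs_self _
          simp only [hbound]
          nlinarith [le_max_left (-A z) (0:ℝ), le_max_left (-B z.1) (0:ℝ),
            le_max_right (-C z.2) (0:ℝ)]
      have hIA : Integrable A γ :=
        Integrable.mono' hIbound hmA.aestronglyMeasurable hboundA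
      have hIB : Integrable (fun z : X × Y => B z.1) γ :=
        Integrable.mono' hIbound (hmB.comp measurable_fst).aestronglyMeasurable hboundB
      have hIC : Integrable (fun z : X × Y => C z.2) γ :=
        Integrable.mono' hIbound (hmC.comp measurable_snd).aestronglyMeasurable hboundC
      -- integral identities
      have hintB : ∫ x, B x ∂ρ₁ = ∫ z, B z.1 ∂γ := by
        rw [hρ₁def]
        exact integral_map measurable_fst.aemeasurable hmB.aestronglyMeasurable
      have hintC : ∫ y, C y ∂ρ₂ = ∫ z, C z.2 ∂γ := by
        rw [hρ₂def]
        exact integral_map measurable_snd.aemeasurable hmC.aestronglyMeasurable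
      have hintL : ∫ z, L z ∂γ = ∫ z, A z ∂γ + ∫ z, B z.1 ∂γ + ∫ z, C z.2 ∂γ := by
        have hAB : Integrable (fun z : X × Y => A z + B z.1) γ := hIA.add hIB
        rw [integral_congr_ae hAE, integral_add hAB hIC, integral_add hIA hIB]
      rw [KL, KL, KL, KL, if_pos ⟨hac, hIntL⟩, if_pos ⟨hγρ, hIA⟩,
        if_pos ⟨h1, hBiff.mpr hIB⟩, if_pos ⟨h2, hCiff.mpr hIC⟩]
      rw [show (∫ z, Real.log ((γ.rnDeriv (m₁.prod m₂) z).toReal) ∂γ) = ∫ z, L z ∂γ from rfl]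
      rw [hintL]
      norm_cast
      rw [hintB, hintC]

end
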